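/- Let G be a finite group with a nontrivial normal subgroup E that is a direct product of nonabelian simple groups, let R be a non-normal Sylow r-subgroup of G, and suppose R is contained in a unique maximal subgroup of G and E ∩ R ≠ 1. Then G = ER. -/

import Mathlib

open Subgroup Pointwise


/-- From the proof of Lemma 3.10 / Theorem 3.11(iv): let `G` be a finite group with a
nontrivial normal subgroup `E` which is an internal direct product of nonabelian simple
subgroups, and let `R` be a non-normal Sylow `r`-subgroup of `G` contained in a unique
maximal subgroup of `G`, with `E ⊓ R ≠ 1`. Then `G = ER`. -/
theorem stmt_19 {G : Type*} [Group G] [Finite G] {r : ℕ} (hr : r.Prime)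
    (R : Sylow r G) (hRnn : ¬ (R : Subgroup G).Normal)
    (hu : ∃! H : Subgroup G, IsCoatom H ∧ (R : Subgroup G) ≤ H)
    (E : Subgroup G) [E.Normal] (hE : E ≠ ⊥)
    (t : ℕ) (L : Fin t → Subgroup G)
    (hsup : (⨆ i, L i) = E)
    (hindep : ∀ i : Fin t, L i ⊓ (⨆ j : Fin t, ⨆ _ : j ≠ i, L j) = ⊥)
    (hcommute : ∀ i j : Fin t, i ≠ j → ∀ x ∈ L i, ∀ y ∈ L j, x * y = y * x)
    (hsimple : ∀ i, IsSimpleGroup ↥(L i))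
    (hnonab : ∀ i, ∃ a b : ↥(L i), a * b ≠ b * a)
    (hER : E ⊓ (R : Subgroup G) ≠ ⊥) :
    E ⊔ (R : Subgroup G) = ⊤ := by
  classical
  haveI : Fact r.Prime := ⟨hr⟩
  set K : Subgroup G := E ⊓ (R : Subgroup G) with hKdef
  have hEnormal : E.Normal := inferInstance
  have hKle : K ≤ E := inf_le_left
  have hKR : K ≤ (R : Subgroup G) := inf_le_right
  have hKp : IsPGroup r K := R.isPGroup'.to_le hKR
  -- centers of the simple factors are trivial
  have hcent : ∀ i, Subgroup.center ↥(L i) = ⊥ := by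
    intro i
    haveI := hsimple i
    rcases Subgroup.Normal.eq_bot_or_eq_top
        (inferInstance : (Subgroup.center ↥(L i)).Normal) with h | h
    · exact h
    · obtain ⟨a, b, hab⟩ := hnonab i
      letI := Group.commGroupOfCenterEqTop h
      exact absurd (mul_comm a b) hab
  -- E normalizes each L i
  have hnorm : ∀ i, E ≤ normalizer ((L i : Subgroup G) : Set G) := by
    intro i
    rw [← hsup]
    refine iSup_le fun j => fun x hx => ?_
    rw [Subgroup.mem_normalizer_iff]
    intro h
    by_cases hji : j = i
    · subst hji
      constructor
      · intro hh
        exact mul_mem (mul_mem hx hh) (inv_mem hx)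
      · intro hh
        have := mul_mem (mul_mem (inv_mem hx) hh) hx
        have e : x⁻¹ * (x * h * x⁻¹) * x = h := by group
        rwa [e] at this
    · constructor
      · intro hh
        have e : x * h * x⁻¹ = h := by
          have := hcommute j i hji x hx h hh
          group
          rw [this]
          group
        rwa [e]
      · intro hh
        have hc : (x * h * x⁻¹) * x = x * (x * h * x⁻¹) := hcommute i j (Ne.symm hji) _ hh x hx
        have e : h = x * h * x⁻¹ := by
          have h1 : x * h = x * (x * h * x⁻¹) := by rw [← hc]; group
          exact mul_left_cancel h1
        rwa [← e] at hh
  -- R normalizes K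
  have hRN : (R : Subgroup G) ≤ normalizer (K : Set G) := by
    intro x hx
    rw [Subgroup.mem_normalizer_iff]
    intro h
    simp only [hKdef, Subgroup.mem_inf]
    constructor
    · rintro ⟨hE1, hR1⟩
      exact ⟨hEnormal.conj_mem h hE1 x, mul_mem (mul_mem hx hR1) (inv_mem hx)⟩
    · rintro ⟨hE1, hR1⟩
      have h1 : x⁻¹ * (x * h * x⁻¹) * x⁻¹⁻¹ ∈ E := hEnormal.conj_mem _ hE1 x⁻¹
      have h2 : x⁻¹ * (x * h * x⁻¹) * x⁻¹⁻¹ ∈ (R : Subgroup G) :=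
        mul_mem (mul_mem (inv_mem hx) hR1) (inv_mem (inv_mem hx))
      have e : x⁻¹ * (x * h * x⁻¹) * x⁻¹⁻¹ = h := by group
      rw [e] at h1 h2
      exact ⟨h1, h2⟩
  -- Frattini argument: K.normalizer ⊔ E = ⊤
  have hFrat : normalizer (K : Set G) ⊔ E = ⊤ := by
    haveI : Finite (Sylow r G) :=
      Finite.of_injective (fun P : Sylow r G => (P : Subgroup G)) fun P Q h => Sylow.ext h
    have hKpE : IsPGroup r (K.subgroupOf E) := hKp.comap_subtype
    obtain ⟨P, hKP⟩ := hKpE.exists_le_sylow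
    set P' : Subgroup G := (P : Subgroup ↥E).map E.subtype with hP'def
    have hP'E : P' ≤ E := Subgroup.map_subtype_le _
    have hKP' : K ≤ P' := by
      have h1 := Subgroup.map_mono (f := E.subtype) hKP
      rwa [Subgroup.subgroupOf_map_subtype, inf_of_le_left hKle] at h1
    have hP'p : IsPGroup r P' := P.isPGroup'.map E.subtype
    obtain ⟨Q, hP'Q⟩ := hP'p.exists_le_sylow
    obtain ⟨g, hg⟩ := MulAction.exists_smul_eq G Q R
    set c : G ≃* G := MulAut.conj g with hcdef
    have hconv : ∀ S : Subgroup G, MulAut.conj g • S = S.map c.toMonoidHom := fun S => rfl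
    have hQmap : (Q : Subgroup G).map c.toMonoidHom = (R : Subgroup G) := by
      have h2 : ((g • Q : Sylow r G) : Subgroup G) = (R : Subgroup G) := by rw [hg]
      rw [Sylow.coe_subgroup_smul, hconv] at h2
      exact h2
    have hEmap : E.map c.toMonoidHom = E := by
      apply le_antisymm
      · rintro x ⟨y, hy, rfl⟩
        exact hEnormal.conj_mem y hy g
      · intro x hx
        refine ⟨g⁻¹ * x * g, by simpa using hEnormal.conj_mem x hx g⁻¹, ?_⟩
        simp [hcdef]
        group
    have hP'map : P'.map c.toMonoidHom = K := by
      apply Subgroup.eq_of_le_of_card_ge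
      · refine le_inf ?_ ?_
        · calc P'.map c.toMonoidHom ≤ E.map c.toMonoidHom := Subgroup.map_mono hP'E
            _ = E := hEmap
        · calc P'.map c.toMonoidHom ≤ (Q : Subgroup G).map c.toMonoidHom :=
              Subgroup.map_mono hP'Q
            _ = (R : Subgroup G) := hQmap
      · calc Nat.card K ≤ Nat.card P' := Subgroup.card_le_of_le hKP'
          _ = Nat.card (P'.map c.toMonoidHom) :=
            Nat.card_congr (Subgroup.equivMapOfInjective P' c.toMonoidHom c.injective).toEquiv
    have h0 := Sylow.normalizer_sup_eq_top (p := r) P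
    have h1 := congrArg (Subgroup.map c.toMonoidHom) h0
    rw [Subgroup.map_sup, Subgroup.map_equiv_normalizer_eq, hP'map, hEmap,
      Subgroup.map_top_of_surjective _ c.surjective] at h1
    exact h1
  -- K is not normal in G
  have hKnn : normalizer (K : Set G) ≠ ⊤ := by
    intro hN
    haveI hKnorm : K.Normal := Subgroup.normalizer_eq_top_iff.mp hN
    by_cases hex : ∃ i, L i ≤ K
    · obtain ⟨i, hle⟩ := hex
      haveI := hsimple i
      have hLp : IsPGroup r (L i) := hKp.to_le hle
      have hc := hLp.center_nontrivial
      rw [hcent i] at hc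
      obtain ⟨a, b, hab⟩ := hc
      exact hab (Subsingleton.elim a b)
    · have hKL : ∀ i, K ⊓ L i = ⊥ := by
        intro i
        haveI := hsimple i
        have hnormal : ((K ⊓ L i).subgroupOf (L i)).Normal := by
          constructor
          intro n hn x
          rw [Subgroup.mem_subgroupOf] at hn ⊢
          obtain ⟨hn1, hn2⟩ := Subgroup.mem_inf.mp hn
          exact Subgroup.mem_inf.mpr
            ⟨hKnorm.conj_mem _ hn1 x, mul_mem (mul_mem x.2 hn2) (inv_mem x.2)⟩
        rcases hnormal.eq_bot_or_eq_top with hb | ht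
        · rw [eq_bot_iff]
          rintro x hx
          obtain ⟨hxK, hxL⟩ := Subgroup.mem_inf.mp hx
          have hm : (⟨x, hxL⟩ : ↥(L i)) ∈ (K ⊓ L i).subgroupOf (L i) :=
            Subgroup.mem_subgroupOf.mpr (Subgroup.mem_inf.mpr ⟨hxK, hxL⟩)
          rw [hb, Subgroup.mem_bot] at hm
          exact Subgroup.mem_bot.mpr (by simpa [Subtype.ext_iff] using hm)
        · refine absurd ⟨i, fun x hx => ?_⟩ hex
          have hm : (⟨x, hx⟩ : ↥(L i)) ∈ (K ⊓ L i).subgroupOf (L i) := by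
            rw [ht]; trivial
          exact (Subgroup.mem_inf.mp (Subgroup.mem_subgroupOf.mp hm)).1
      -- K centralizes each L i
      have hKc : ∀ i, ∀ k ∈ K, ∀ y ∈ L i, k * y = y * k := by
        intro i k hk y hy
        have h1 : y * k * y⁻¹ * k⁻¹ ∈ K :=
          mul_mem (hKnorm.conj_mem k hk y) (inv_mem hk)
        have hnormk : k ∈ normalizer ((L i : Subgroup G) : Set G) := hnorm i (hKle hk)
        have h2 : k * y⁻¹ * k⁻¹ ∈ L i :=
          (Subgroup.mem_normalizer_iff.mp hnormk y⁻¹).mp (inv_mem hy)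
        have h3 : y * k * y⁻¹ * k⁻¹ ∈ L i := by
          have := mul_mem hy h2
          simpa [mul_assoc] using this
        have h4 : y * k * y⁻¹ * k⁻¹ ∈ K ⊓ L i := Subgroup.mem_inf.mpr ⟨h1, h3⟩
        rw [hKL i, Subgroup.mem_bot] at h4
        have h5 : y * k * y⁻¹ * k⁻¹ * k = k := by rw [h4, one_mul]
        have h6 : y * k * y⁻¹ = k := by
          have := h5
          group at this
          simpa using this
        calc k * y = (y * k * y⁻¹) * y := by rw [h6]
          _ = y * k := by group
      -- the internal direct product decomposition
      set φ : ∀ i : Fin t, ↥(L i) →* G := fun i => (L i).subtype with hφ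
      have hpair : Pairwise fun i j : Fin t =>
          ∀ (x : ↥(L i)) (y : ↥(L j)), Commute (φ i x) (φ j y) :=
        fun i j hij x y => hcommute i j hij x x.2 y y.2
      set ψ := MonoidHom.noncommPiCoprod φ hpair with hψ
      have hrange : ψ.range = E := by
        rw [hψ, MonoidHom.noncommPiCoprod_range]
        simp only [hφ, Subgroup.range_subtype]
        exact hsup
      have hind : iSupIndep fun i => (φ i).range := by
        intro i
        simp only [hφ, Subgroup.range_subtype]
        rw [disjoint_iff]
        exact hindep i
      have hinj : Function.Injective ψ :=
        MonoidHom.injective_noncommPiCoprod_of_iSupIndep (ϕ := φ) (hcomm := hpair) hind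
          fun i => Subtype.coe_injective
      obtain ⟨k, hk, hk1⟩ : ∃ k ∈ K, k ≠ 1 := by
        rcases K.bot_or_exists_ne_one with h | h
        · exact absurd h hER
        · exact h
      have hkE : k ∈ ψ.range := hrange ▸ hKle hk
      obtain ⟨f, hf⟩ := hkE
      have hfex : ∃ i, f i ≠ 1 := by
        by_contra h
        push_neg at h
        have hfone : f = 1 := funext h
        rw [hfone, map_one] at hf
        exact hk1 hf.symm
      obtain ⟨i, hfi⟩ := hfex
      have hcentral : f i ∈ Subgroup.center ↥(L i) := by
        rw [Subgroup.mem_center_iff]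
        intro y
        set f' := Function.update f i (y * f i * y⁻¹) with hf'
        have hconj : (y : G) * ψ f * (y : G)⁻¹ = ψ f' := by
          have e1 : (y : G) * ψ f * (y : G)⁻¹
              = (MulAut.conj (y : G)).toMonoidHom (ψ f) := rfl
          rw [e1, hψ, MonoidHom.noncommPiCoprod_apply, MonoidHom.noncommPiCoprod_apply,
            Finset.map_noncommProd]
          refine Finset.noncommProd_congr rfl (fun j _ => ?_) _
          by_cases hji : j = i
          · subst hji
            rw [hf', Function.update_self]
            rfl
          · rw [hf', Function.update_of_ne hji]
            have hc2 : (y : G) * φ j (f j) = φ j (f j) * (y : G) :=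
              hcommute i j (Ne.symm hji) _ y.2 _ (f j).2
            show (y : G) * φ j (f j) * (y : G)⁻¹ = φ j (f j)
            rw [hc2]
            group
        have hyk : (y : G) * ψ f * (y : G)⁻¹ = ψ f := by
          rw [hf]
          have := hKc i k hk (y : G) y.2
          rw [← this]
          group
        have hff' : ψ f' = ψ f := by rw [← hconj, hyk]
        have : f' = f := hinj hff'
        have hii : y * f i * y⁻¹ = f i := by
          have := congrFun this i
          rwa [hf', Function.update_self] at this
        calc y * f i = (y * f i * y⁻¹) * y := by group
          _ = f i * y := by rw [hii]
      rw [hcent i, Subgroup.mem_bot] at hcentral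
      exact hfi hcentral
  -- conclude using the unique maximal subgroup
  by_contra htop
  obtain ⟨H, ⟨hHco, hHR⟩, hHuniq⟩ := hu
  obtain ⟨M, hMco, hNM⟩ := (eq_top_or_exists_le_coatom (normalizer (K : Set G))).resolve_left hKnn
  have hMH : M = H := hHuniq M ⟨hMco, le_trans hRN hNM⟩
  obtain ⟨M', hM'co, hM'le⟩ := (eq_top_or_exists_le_coatom (E ⊔ (R : Subgroup G))).resolve_left htop
  have hM'H : M' = H := hHuniq M' ⟨hM'co, le_trans le_sup_right hM'le⟩
  have hEH : E ≤ H := hM'H ▸ le_trans le_sup_left hM'le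
  have hNH : normalizer (K : Set G) ≤ H := hMH ▸ hNM
  have : (⊤ : Subgroup G) ≤ H := hFrat ▸ sup_le hNH hEH
  exact hHco.1 (top_le_iff.mp this)
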